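/- Let K be a field, A a central simple K-algebra of dimension p² for a prime p, L ⊆ A a maximal subfield with L/K cyclic Galois with generator σ, and c ∈ A* an element with c a c^{-1} = σ(a) for all a ∈ L. Then the powers 1, c, c², ..., c^{p-1} are linearly independent over L, L and c generate A as a K-algebra, and c^p ∈ K. -/

import Mathlib

/-- Let `A` be a central simple `K`-algebra of dimension `p²` (`p` prime), `L ⊆ A` a
maximal subfield with `L/K` cyclic Galois generated by `σ`, and `c ∈ A*` with
`c a c⁻¹ = σ(a)` for all `a ∈ L`. Then `1, c, …, c^(p-1)` are linearly independent
over `L`, `L` and `c` generate `A` as a `K`-algebra, and `c^p ∈ K`. -/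
theorem skolem_noether_element_properties
    (K : Type*) [Field K] (p : ℕ) (hp : p.Prime)
    (A : Type*) [Ring A] [Algebra K A] [Algebra.IsCentral K A] [IsSimpleRing A]
    (hdim : Module.finrank K A = p ^ 2)
    (L : Type*) [Field L] [Algebra K L] [IsGalois K L]
    (hL : Module.finrank K L = p)
    (σ : L ≃ₐ[K] L) (hσ : ∀ τ : L ≃ₐ[K] L, τ ∈ Subgroup.zpowers σ)
    (ι : L →ₐ[K] A)
    (c : Aˣ) (hc : ∀ a : L, Units.val c * ι a * Units.val c⁻¹ = ι (σ a)) :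
    (∀ f : Fin p → L, (∑ i : Fin p, ι (f i) * (Units.val c) ^ (i : ℕ)) = 0 →
      ∀ i, f i = 0) ∧
    Algebra.adjoin K ((Set.range fun x : L => ι x) ∪ {Units.val c}) = ⊤ ∧
    ∃ k : K, (Units.val c) ^ p = algebraMap K A k := by
  have hnt : Nontrivial A := inferInstance
  have hιinj : Function.Injective ι := ι.toRingHom.injective
  have hc1 : ∀ a : L, (c : A) * ι a = ι (σ a) * c := by
    intro a
    calc (c : A) * ι a = ((c : A) * ι a * (c⁻¹ : Aˣ)) * c := by
          simp [mul_assoc]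
      _ = ι (σ a) * c := by rw [hc a]
  have hcn : ∀ (n : ℕ) (a : L), (c : A) ^ n * ι a = ι ((σ ^ n) a) * (c : A) ^ n := by
    intro n
    induction n with
    | zero => simp
    | succ n ihn =>
      intro a
      rw [pow_succ', mul_assoc, ihn, ← mul_assoc, hc1, mul_assoc, ← pow_succ']
      simp [pow_succ', AlgEquiv.mul_apply]
  have hLfin : FiniteDimensional K L := by
    apply FiniteDimensional.of_finrank_pos
    rw [hL]; exact hp.pos
  have hcard : Fintype.card (L ≃ₐ[K] L) = p := by
    rw [← Nat.card_eq_fintype_card, IsGalois.card_aut_eq_finrank, hL]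
  have horder : orderOf σ = p := by
    have hdvd : orderOf σ ∣ p := hcard ▸ orderOf_dvd_card
    rcases (Nat.Prime.eq_one_or_self_of_dvd hp _ hdvd) with h1 | h
    · exfalso
      have hσ1 : σ = 1 := orderOf_eq_one_iff.mp h1
      have htriv : ∀ τ : L ≃ₐ[K] L, τ = 1 := by
        intro τ
        obtain ⟨n, hn⟩ := hσ τ
        rw [← hn, hσ1]; simp
      have h1' : Fintype.card (L ≃ₐ[K] L) = 1 := by
        rw [Fintype.card_eq_one_iff]; exact ⟨1, fun τ => htriv τ⟩
      have := hp.two_le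
      omega
    · exact h
  have hσp : σ ^ p = 1 := by rw [← horder]; exact pow_orderOf_eq_one σ
  have hpowne : ∀ i j : Fin p, i ≠ j → ∃ x : L, (σ ^ (i:ℕ)) x ≠ (σ ^ (j:ℕ)) x := by
    intro i j hij
    by_contra hcon
    push_neg at hcon
    have heq : σ ^ (i:ℕ) = σ ^ (j:ℕ) := AlgEquiv.ext hcon
    have := pow_injOn_Iio_orderOf (x := σ) (by rw [horder]; exact i.2)
      (by rw [horder]; exact j.2) heq
    exact hij (Fin.ext this)
  -- Part 1: linear independence
  have part1 : ∀ f : Fin p → L,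
      (∑ i : Fin p, ι (f i) * (c : A) ^ (i : ℕ)) = 0 → ∀ i, f i = 0 := by
    have key : ∀ s : Finset (Fin p), ∀ f : Fin p → L, (∀ i, f i ≠ 0 → i ∈ s) →
        (∑ i : Fin p, ι (f i) * (c : A) ^ (i : ℕ)) = 0 → ∀ i, f i = 0 := by
      intro s
      induction s using Finset.strongInduction with
      | _ s ih =>
        intro f hsupp hsum
        by_cases hone : ∀ j k, f j ≠ 0 → f k ≠ 0 → j = k
        · intro i
          by_contra hfi
          have hsum2 : ι (f i) * (c : A) ^ (i:ℕ) = 0 := by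
            rw [← hsum]
            rw [Finset.sum_eq_single i]
            · intro j _ hji
              have : f j = 0 := by
                by_contra hfj
                exact hji (hone j i hfj hfi)
              simp [this]
            · intro h; exact absurd (Finset.mem_univ i) h
          have : ι (f i) = 0 := by
            rw [← Units.val_pow_eq_pow_val] at hsum2
            exact (Units.mul_left_eq_zero _).mp hsum2
          exact hfi (hιinj (by simpa using this))
        · exfalso
          push_neg at hone
          obtain ⟨j, k, hfj, hfk, hjk⟩ := hone
          obtain ⟨x, hx⟩ := hpowne k j (fun h => hjk h.symm)
          set g : Fin p → L := fun i => f i * ((σ ^ (i:ℕ)) x - (σ ^ (j:ℕ)) x) with hg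
          have hgsum : (∑ i : Fin p, ι (g i) * (c : A) ^ (i:ℕ)) = 0 := by
            have e1 : (∑ i : Fin p, ι (f i) * (c : A) ^ (i:ℕ)) * ι x = 0 := by
              rw [hsum, zero_mul]
            have e2 : ι ((σ ^ (j:ℕ)) x) * (∑ i : Fin p, ι (f i) * (c : A) ^ (i:ℕ)) = 0 := by
              rw [hsum, mul_zero]
            rw [Finset.sum_mul] at e1
            rw [Finset.mul_sum] at e2
            have e1' : (∑ i : Fin p, ι (f i * (σ ^ (i:ℕ)) x) * (c : A) ^ (i:ℕ)) = 0 := by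
              rw [← e1]
              apply Finset.sum_congr rfl
              intro i _
              rw [map_mul, mul_assoc, mul_assoc, hcn]
            have e2' : (∑ i : Fin p, ι (f i * (σ ^ (j:ℕ)) x) * (c : A) ^ (i:ℕ)) = 0 := by
              rw [← e2]
              apply Finset.sum_congr rfl
              intro i _
              rw [mul_comm (f i), map_mul, mul_assoc]
            calc (∑ i : Fin p, ι (g i) * (c : A) ^ (i:ℕ))
                = (∑ i : Fin p, (ι (f i * (σ ^ (i:ℕ)) x) * (c : A) ^ (i:ℕ)
                    - ι (f i * (σ ^ (j:ℕ)) x) * (c : A) ^ (i:ℕ))) := by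
                  apply Finset.sum_congr rfl
                  intro i _
                  rw [hg]
                  simp only [mul_sub, map_sub, sub_mul]
              _ = 0 := by rw [Finset.sum_sub_distrib, e1', e2', sub_zero]
          have hjs : j ∈ s := hsupp j hfj
          have hgzero : ∀ i, g i = 0 := by
            apply ih (s.erase j) (Finset.erase_ssubset hjs) g _ hgsum
            intro i hgi
            have hfi : f i ≠ 0 := by
              intro h
              apply hgi
              rw [hg]; simp [h]
            have hij : i ≠ j := by
              intro h
              apply hgi
              rw [hg, h]; simp
            exact Finset.mem_erase.mpr ⟨hij, hsupp i hfi⟩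
          have := hgzero k
          rw [hg] at this
          simp only [mul_eq_zero, sub_eq_zero] at this
          tauto
    intro f hsum
    exact key Finset.univ f (fun i _ => Finset.mem_univ i) hsum
  -- the linear map
  let φ : (Fin p → L) →ₗ[K] A :=
    { toFun := fun f => ∑ i : Fin p, ι (f i) * (c : A) ^ (i:ℕ)
      map_add' := by
        intro f g
        rw [← Finset.sum_add_distrib]
        apply Finset.sum_congr rfl
        intro i _
        simp [add_mul]
      map_smul' := by
        intro k f
        show (∑ i : Fin p, ι ((k • f) i) * (c : A) ^ (i:ℕ)) = _
        simp [Pi.smul_apply, map_smul, smul_mul_assoc, Finset.smul_sum] }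
  have hφinj : Function.Injective φ := by
    rw [← LinearMap.ker_eq_bot]
    rw [Submodule.eq_bot_iff]
    intro f hf
    funext i
    exact part1 f hf i
  have hAfin : FiniteDimensional K A := by
    apply FiniteDimensional.of_finrank_pos
    rw [hdim]
    exact pow_pos hp.pos 2
  have hrange : LinearMap.range φ = ⊤ := by
    apply Submodule.eq_top_of_finrank_eq
    rw [LinearMap.finrank_range_of_inj hφinj, hdim]
    rw [Module.finrank_pi_fintype, hL]
    simp [Finset.sum_const, sq]
  have part2 : Algebra.adjoin K ((Set.range fun x : L => ι x) ∪ {(c : A)}) = ⊤ := by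
    rw [eq_top_iff]
    intro y _
    have : y ∈ LinearMap.range φ := by rw [hrange]; trivial
    obtain ⟨f, rfl⟩ := this
    show (∑ i : Fin p, ι (f i) * (c : A) ^ (i:ℕ)) ∈ _
    apply Subalgebra.sum_mem
    intro i _
    apply Subalgebra.mul_mem
    · apply Algebra.subset_adjoin
      exact Or.inl ⟨f i, rfl⟩
    · apply Subalgebra.pow_mem
      apply Algebra.subset_adjoin
      exact Or.inr rfl
  have part3 : ∃ k : K, (c : A) ^ p = algebraMap K A k := by
    have hcomm : ∀ y : A, (c : A) ^ p * y = y * (c : A) ^ p := by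
      have hgen : (Set.range fun x : L => ι x) ∪ {(c : A)} ⊆
          (Subalgebra.centralizer K {(c : A) ^ p} : Set A) := by
        rintro y (⟨a, rfl⟩ | hy)
        · intro z hz
          rw [Set.mem_singleton_iff] at hz
          subst hz
          show (c : A) ^ p * ι a = ι a * (c : A) ^ p
          rw [hcn p a, hσp]
          simp
        · rw [Set.mem_singleton_iff] at hy
          subst hy
          intro z hz
          rw [Set.mem_singleton_iff] at hz
          subst hz
          rw [← pow_succ, ← pow_succ']
      have : Algebra.adjoin K ((Set.range fun x : L => ι x) ∪ {(c : A)}) ≤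
          Subalgebra.centralizer K {(c : A) ^ p} :=
        Algebra.adjoin_le hgen
      rw [part2, top_le_iff] at this
      intro y
      have hy : y ∈ Subalgebra.centralizer K ({(c : A) ^ p} : Set A) := by
        rw [this]; trivial
      exact hy _ rfl
    have hcenter : (c : A) ^ p ∈ Subalgebra.center K A := by
      rw [Subalgebra.mem_center_iff]
      intro y
      exact (hcomm y).symm
    have := Algebra.IsCentral.out (K := K) (D := A) hcenter
    rw [Algebra.mem_bot] at this
    obtain ⟨k, hk⟩ := this
    exact ⟨k, hk.symm⟩
  exact ⟨part1, part2, part3⟩
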